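/- For every x, ξ ∈ ℝ, writing ⟨ξ⟩ = √(1+ξ²), one has ∫_ℝ e^{i(x-y)ξ - ⟨ξ⟩ (x-y)²} (1 + i (x-y) ξ/⟨ξ⟩) dy = √π e^{-ξ²/(4⟨ξ⟩)} (⟨ξ⟩^{-1/2} - ξ²/(2 ⟨ξ⟩^{5/2})). In particular, the left-hand side is independent of x. -/

import Mathlib

open MeasureTheory Complex Real
open scoped FourierTransform


lemma fourier_mul_gaussian {b : ℂ} (hb : 0 < b.re) (w : ℝ) :
    ∫ v : ℝ, (v : ℂ) * Complex.exp (Complex.I * (-2 * π * w) * v - b * v ^ 2) =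
      ((π : ℂ) / b) ^ (1 / 2 : ℂ) *
        Complex.exp ((-(2 * π : ℂ) ^ 2 / (4 * b)) * (w : ℂ) ^ 2) *
        (-Complex.I * π * w / b) := by
  have hb0 : b ≠ 0 := by intro h; rw [h] at hb; simp at hb
  set f : ℝ → ℂ := fun u => Complex.exp (-b * u ^ 2) with hf_def
  have hf : Integrable f := integrable_cexp_neg_mul_sq hb
  have hf' : Integrable (fun u : ℝ => u • f u) := by
    simpa [hf_def, real_smul] using integrable_mul_cexp_neg_mul_sq hb
  have hA : 𝓕 f = fun t : ℝ => ((π : ℂ) / b) ^ (1 / 2 : ℂ) *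
      Complex.exp ((-(2 * π : ℂ) ^ 2 / (4 * b)) * (t : ℂ) ^ 2) := by
    ext t
    rw [Real.fourier_real_eq_integral_exp_smul]
    rw [show (∫ v : ℝ, Complex.exp (↑(-2 * π * v * t) * Complex.I) • f v)
        = ∫ v : ℝ, Complex.exp (Complex.I * (-2 * π * t : ℂ) * v) * Complex.exp (-b * v ^ 2) by
      congr 1; ext v; rw [smul_eq_mul]; congr 2; push_cast; ring]
    rw [fourierIntegral_gaussian hb]
    congr 1
    ring
  have hG : HasDerivAt (𝓕 f)
      (((π : ℂ) / b) ^ (1 / 2 : ℂ) *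
        Complex.exp ((-(2 * π : ℂ) ^ 2 / (4 * b)) * (w : ℂ) ^ 2) *
        ((-(2 * π : ℂ) ^ 2 / (4 * b)) * (2 * w))) w := by
    rw [hA]
    have h0 : HasDerivAt (fun t : ℝ => (t : ℂ)) 1 w := by
      simpa using (hasDerivAt_id w).ofReal_comp
    have h1 : HasDerivAt (fun t : ℝ => (t : ℂ) ^ 2) (2 * (w : ℂ)) w := by
      have h := h0.fun_mul h0
      exact (h.congr_deriv (by ring)).congr_of_eventuallyEq
        (Filter.Eventually.of_forall fun t => by ring)
    have h2 := (h1.const_mul (-(2 * π : ℂ) ^ 2 / (4 * b))).cexp.const_mul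
      (((π : ℂ) / b) ^ (1 / 2 : ℂ))
    exact h2.congr_deriv (by ring)
  have heq := (Real.hasDerivAt_fourier hf hf' w).unique hG
  rw [Real.fourier_real_eq_integral_exp_smul] at heq
  have hexp : (∫ v : ℝ, Complex.exp (↑(-2 * π * v * w) * Complex.I) •
        ((-2 * ↑π * Complex.I * ↑v) • f v))
      = (-2 * ↑π * Complex.I) * ∫ v : ℝ,
          (v : ℂ) * Complex.exp (Complex.I * (-2 * π * w) * v - b * v ^ 2) := by
    rw [← integral_const_mul]
    congr 1; ext v
    rw [smul_eq_mul, smul_eq_mul, hf_def]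
    rw [show Complex.I * (-2 * π * w : ℂ) * v - b * v ^ 2
        = (↑(-2 * π * v * w) * Complex.I) + (-b * v ^ 2) by push_cast; ring, Complex.exp_add]
    ring
  rw [hexp] at heq
  have hpi : (-2 * (π : ℂ) * Complex.I) ≠ 0 := by
    simp [Real.pi_ne_zero, Complex.I_ne_zero]
  apply mul_left_cancel₀ hpi
  rw [heq]
  set S := ((π : ℂ) / b) ^ (1 / 2 : ℂ) *
      Complex.exp ((-(2 * π : ℂ) ^ 2 / (4 * b)) * (w : ℂ) ^ 2) with hS
  rw [show (-2 * (π:ℂ) * Complex.I) * (S * (-Complex.I * π * w / b))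
      = S * (Complex.I ^ 2 * (2 * (π:ℂ) ^ 2 * w / b)) from by ring, Complex.I_sq]
  ring

lemma mul_gaussian_integral {b : ℂ} (hb : 0 < b.re) (t : ℝ) :
    ∫ v : ℝ, (v : ℂ) * Complex.exp (Complex.I * t * v - b * v ^ 2) =
      ((π : ℂ) / b) ^ (1 / 2 : ℂ) * Complex.exp (-(t : ℂ) ^ 2 / (4 * b)) *
        (Complex.I * t / (2 * b)) := by
  have hb0 : b ≠ 0 := by intro h; rw [h] at hb; simp at hb
  have hπ : (π : ℂ) ≠ 0 := by exact_mod_cast Real.pi_ne_zero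
  have h := fourier_mul_gaussian hb (-t / (2 * π))
  have h1 : (-2 * (π : ℂ) * ((-t / (2 * π) : ℝ) : ℂ)) = (t : ℂ) := by
    push_cast; field_simp
  rw [show (fun v : ℝ => (v : ℂ) *
        Complex.exp (Complex.I * (-2 * π * ((-t / (2 * π) : ℝ) : ℂ)) * v - b * v ^ 2))
      = fun v : ℝ => (v : ℂ) * Complex.exp (Complex.I * t * v - b * v ^ 2) by
    ext v; rw [h1]] at h
  rw [h]
  rw [show ((-t / (2 * π) : ℝ) : ℂ) = -t / (2 * π) by push_cast; ring]
  congr 1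
  · congr 2
    push_cast
    field_simp
  · push_cast
    field_simp

lemma gaussian_integral0 {b : ℂ} (hb : 0 < b.re) (t : ℝ) :
    ∫ v : ℝ, Complex.exp (Complex.I * t * v - b * v ^ 2) =
      ((π : ℂ) / b) ^ (1 / 2 : ℂ) * Complex.exp (-(t : ℂ) ^ 2 / (4 * b)) := by
  rw [show (fun v : ℝ => Complex.exp (Complex.I * t * v - b * v ^ 2))
      = fun v : ℝ => Complex.exp (Complex.I * t * v) * Complex.exp (-b * v ^ 2) by
    ext v; rw [← Complex.exp_add]; congr 1; ring]
  exact fourierIntegral_gaussian hb t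

lemma integrable0 {b : ℂ} (hb : 0 < b.re) (t : ℝ) :
    Integrable (fun v : ℝ => Complex.exp (Complex.I * t * v - b * v ^ 2)) := by
  have := integrable_cexp_quadratic hb (Complex.I * t) 0
  apply this.congr
  filter_upwards with v
  congr 1
  ring

lemma integrable1 {b : ℂ} (hb : 0 < b.re) (t : ℝ) :
    Integrable (fun v : ℝ => (v : ℂ) * Complex.exp (Complex.I * t * v - b * v ^ 2)) := by
  have hg := integrable_mul_cexp_neg_mul_sq hb
  have := hg.bdd_mul (c := 1) (f := fun v : ℝ => Complex.exp (Complex.I * t * v))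
    (Complex.continuous_exp.comp (by continuity)).aestronglyMeasurable
    (ae_of_all _ fun v => by
      rw [Complex.norm_exp]
      simp)
  apply this.congr
  filter_upwards with v
  rw [show Complex.I * t * v - b * v ^ 2 = Complex.I * t * v + (-b * v ^ 2) by ring,
    Complex.exp_add]
  ring


/-- Explicit computation of the FBI transform of the constant function `1` in
dimension one: writing `⟨ξ⟩ = √(1+ξ²)`,
`∫ e^{i(x-y)ξ - ⟨ξ⟩(x-y)²}(1 + i(x-y)ξ/⟨ξ⟩) dy
  = √π e^{-ξ²/(4⟨ξ⟩)} (⟨ξ⟩^{-1/2} - ξ²/(2⟨ξ⟩^{5/2}))`,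
which is independent of `x`. -/
theorem stmt6 (x ξ : ℝ) :
    ∫ y : ℝ, Complex.exp (Complex.I * (x - y) * ξ -
        (Real.sqrt (1 + ξ ^ 2) : ℂ) * ((x : ℂ) - y) ^ 2) *
        (1 + Complex.I * ((x : ℂ) - y) * ξ / (Real.sqrt (1 + ξ ^ 2) : ℂ)) =
      (Real.sqrt Real.pi : ℂ) *
        Complex.exp (-(ξ ^ 2 : ℂ) / (4 * (Real.sqrt (1 + ξ ^ 2) : ℂ))) *
        (((Real.sqrt (1 + ξ ^ 2) ^ (-(1 / 2 : ℝ)) : ℝ) : ℂ) -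
          (ξ ^ 2 : ℂ) / (2 * ((Real.sqrt (1 + ξ ^ 2) ^ ((5 : ℝ) / 2) : ℝ) : ℂ))) := by
  set s := Real.sqrt (1 + ξ ^ 2) with hs_def
  have hs : 0 < s := Real.sqrt_pos.mpr (by positivity)
  have hb : (0 : ℝ) < ((s : ℂ)).re := by simpa using hs
  have hsC : (s : ℂ) ≠ 0 := by exact_mod_cast hs.ne'
  -- substitution y ↦ x - u
  have hsub : (∫ y : ℝ, Complex.exp (Complex.I * (x - y) * ξ - (s : ℂ) * ((x : ℂ) - y) ^ 2) *
        (1 + Complex.I * ((x : ℂ) - y) * ξ / (s : ℂ)))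
      = ∫ u : ℝ, Complex.exp (Complex.I * ξ * u - (s : ℂ) * (u : ℂ) ^ 2) *
        (1 + Complex.I * u * ξ / (s : ℂ)) := by
    rw [← integral_sub_left_eq_self (fun u : ℝ =>
      Complex.exp (Complex.I * ξ * u - (s : ℂ) * (u : ℂ) ^ 2) *
        (1 + Complex.I * u * ξ / (s : ℂ))) volume x]
    congr 1
    ext y
    push_cast
    ring_nf
  rw [hsub]
  -- split the integral
  have hsplit : (∫ u : ℝ, Complex.exp (Complex.I * ξ * u - (s : ℂ) * (u : ℂ) ^ 2) *
        (1 + Complex.I * u * ξ / (s : ℂ)))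
      = (∫ u : ℝ, Complex.exp (Complex.I * ξ * u - (s : ℂ) * (u : ℂ) ^ 2)) +
        (Complex.I * ξ / s) *
          ∫ u : ℝ, (u : ℂ) * Complex.exp (Complex.I * ξ * u - (s : ℂ) * (u : ℂ) ^ 2) := by
    rw [← MeasureTheory.integral_const_mul, ← MeasureTheory.integral_add (integrable0 hb ξ)
      (((integrable1 hb ξ).const_mul (Complex.I * ξ / s)))]
    congr 1
    ext u
    ring
  rw [hsplit, gaussian_integral0 hb ξ, mul_gaussian_integral hb ξ]
  -- now pure algebra with powers
  have hP : ((π : ℂ) / (s : ℂ)) ^ (1 / 2 : ℂ)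
      = ((Real.sqrt π / Real.sqrt s : ℝ) : ℂ) := by
    rw [show ((π : ℂ) / (s : ℂ)) = ((π / s : ℝ) : ℂ) by push_cast; ring,
      show (1 / 2 : ℂ) = (((1 / 2 : ℝ) : ℂ)) by norm_num,
      ← Complex.ofReal_cpow (by positivity) (1 / 2 : ℝ)]
    rw [← Real.sqrt_eq_rpow, Real.sqrt_div pi_pos.le]
  have h1 : ((s ^ (-(1 / 2) : ℝ) : ℝ) : ℂ) = 1 / ((Real.sqrt s : ℝ) : ℂ) := by
    rw [Real.rpow_neg hs.le, ← Real.sqrt_eq_rpow]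
    push_cast
    ring
  have h2 : ((s ^ ((5 : ℝ) / 2) : ℝ) : ℂ) = (s : ℂ) ^ 2 * ((Real.sqrt s : ℝ) : ℂ) := by
    rw [show ((5 : ℝ) / 2) = (((2 : ℕ) : ℝ) + 1 / 2) by norm_num, Real.rpow_add hs,
      Real.rpow_natCast, ← Real.sqrt_eq_rpow]
    push_cast
    ring
  rw [hP, h1, h2]
  have ha : ((Real.sqrt s : ℝ) : ℂ) ≠ 0 := by
    exact_mod_cast (Real.sqrt_pos.mpr hs).ne'
  set E := Complex.exp (-(ξ : ℂ) ^ 2 / (4 * (s : ℂ))) with hE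
  push_cast
  field_simp
  ring_nf
  rw [Complex.I_sq]
  ring
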